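/- Let k ≥ 4 be even, write r = 2k·k₁ + r₁ with k₁ ≥ k/2 and 1 ≤ r₁ ≤ 2k−1, and partition each side of K_{r,r} into 2k groups U₁,…,U_{2k} and W₁,…,W_{2k}, where U_i and W_i each contain k₁ designated vertices plus one extra vertex when i ≤ r₁. Color edge uw with color 1 if u is the p-th designated vertex of U_i, w is the p-th designated vertex of W_j, and i ≡ j (mod 2), or if u, w are the extra vertices of U_i, W_j with i ≡ j (mod 2); color uw with color 2 if u ∈ U_i and w ∈ W_{i−1} (indices mod 2k); color all remaining edges with color 3. Then for any two distinct vertices u ≠ v lying in the same part of K_{r,r}, there exist at least k internally disjoint rainbow u–v paths of length 2. -/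
import Mathlib


open SimpleGraph

/-- The complete bipartite graph `K_{r,r}` with both parts `Fin r`. -/
abbrev Krr (r : ℕ) : SimpleGraph (Fin r ⊕ Fin r) :=
  completeBipartiteGraph (Fin r) (Fin r)

/-- A walk is a rainbow path (w.r.t. edge-coloring `c`) if it is a path and
all its edges receive pairwise distinct colors. -/
def RainbowPath {V α : Type*} {G : SimpleGraph V} (c : Sym2 V → α) {u v : V}
    (p : G.Walk u v) : Prop :=
  p.IsPath ∧ (p.edges.map c).Nodup

/-- Two `u`-`v` walks are internally disjoint if they share no vertices other
than `u` and `v`. -/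
def IntDisjoint {V : Type*} {G : SimpleGraph V} {u v : V}
    (p q : G.Walk u v) : Prop :=
  ∀ x, x ∈ p.support → x ∈ q.support → x = u ∨ x = v

/-- `G` admits a `j`-edge-coloring under which every two distinct vertices are
joined by at least `k` internally disjoint rainbow paths. -/
def HasRainbowKColoring {V : Type*} (G : SimpleGraph V) (k j : ℕ) : Prop :=
  ∃ c : Sym2 V → Fin j, ∀ u v : V, u ≠ v →
    ∃ P : Fin k → G.Walk u v, Function.Injective P ∧
      (∀ i, RainbowPath c (P i)) ∧
      ∀ i i', i ≠ i' → IntDisjoint (P i) (P i')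

/-- The rainbow `k`-connectivity: the least number of colors as above. -/
noncomputable def rck {V : Type*} (G : SimpleGraph V) (k : ℕ) : ℕ :=
  sInf {j | HasRainbowKColoring G k j}

/-- A side of the bipartition: `2k` groups, each with `k₁` designated vertices
(`Sum.inl (i, p)` is the `p`-th designated vertex of group `i`), plus one extra
vertex `Sum.inr i` for each of the first `r₁` groups. In total `2k·k₁ + r₁ = r`
vertices. -/
abbrev GV (k k₁ r₁ : ℕ) := (Fin (2 * k) × Fin k₁) ⊕ Fin r₁

/-- The group (0-indexed) of a vertex of one side. -/
def grp {k k₁ r₁ : ℕ} : GV k k₁ r₁ → ℕ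
  | Sum.inl (i, _) => i.val
  | Sum.inr s => s.val

/-- The condition for color 1: matched designated vertices (same index `p`) in
same-parity groups, or two extra vertices in same-parity groups. -/
def color1 {k k₁ r₁ : ℕ} : GV k k₁ r₁ → GV k k₁ r₁ → Bool
  | Sum.inl (i, p), Sum.inl (j, q) => decide (p = q ∧ i.val % 2 = j.val % 2)
  | Sum.inr s, Sum.inr t => decide (s.val % 2 = t.val % 2)
  | _, _ => false

/-- The color of the edge from `a` in the `U`-side to `b` in the `W`-side:
color `0` ("1") on matched same-parity pairs, color `1` ("2") on edges from
`U_i` to `W_{i-1}` (indices mod `2k`), and color `2` ("3") otherwise. -/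
def col (k : ℕ) {k₁ r₁ : ℕ} (a b : GV k k₁ r₁) : Fin 3 :=
  if color1 a b then 0
  else if (grp b + 1) % (2 * k) = grp a then 1
  else 2

/-- The 3-edge-coloring of `K_{r,r}` (with `r = 2k·k₁ + r₁`). -/
def theColoring (k k₁ r₁ : ℕ) : Sym2 (GV k k₁ r₁ ⊕ GV k k₁ r₁) → Fin 3 :=
  Sym2.lift ⟨fun x y =>
    match x, y with
    | Sum.inl a, Sum.inr b => col k a b
    | Sum.inr b, Sum.inl a => col k a b
    | _, _ => 0,
    by intro x y; cases x <;> cases y <;> rfl⟩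


lemma grp_lt {k k₁ r₁ : ℕ} (hr₁' : r₁ ≤ 2 * k - 1) (a : GV k k₁ r₁) : grp a < 2 * k := by
  cases a with
  | inl p => obtain ⟨i, q⟩ := p; exact i.isLt
  | inr s => have := s.isLt; simp only [grp]; omega

lemma color1_false {k k₁ r₁ : ℕ} (a m : GV k k₁ r₁) (h : grp a % 2 ≠ grp m % 2) :
    color1 a m = false := by
  rcases a with ⟨i, q⟩ | s <;> rcases m with ⟨j, p⟩ | t
  · simp only [color1, grp] at h ⊢
    simp only [decide_eq_false_iff_not]
    exact fun hc => h hc.2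
  · rfl
  · rfl
  · simp only [color1, grp] at h ⊢
    simp only [decide_eq_false_iff_not]
    exact h

lemma col_eq_one {k k₁ r₁ : ℕ} (a m : GV k k₁ r₁)
    (h1 : (grp m + 1) % (2 * k) = grp a) (h2 : grp a % 2 ≠ grp m % 2) :
    col k a m = 1 := by
  simp [col, color1_false a m h2, h1]

lemma col_ne_one {k k₁ r₁ : ℕ} (a m : GV k k₁ r₁)
    (h1 : (grp m + 1) % (2 * k) ≠ grp a) : col k a m ≠ 1 := by
  unfold col
  split_ifs <;> simp_all

lemma col_eq_zero {k k₁ r₁ : ℕ} (a m : GV k k₁ r₁) (h : color1 a m = true) :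
    col k a m = 0 := by simp [col, h]

lemma col_eq_two {k k₁ r₁ : ℕ} (a m : GV k k₁ r₁) (h1 : color1 a m = false)
    (h2 : (grp m + 1) % (2 * k) ≠ grp a) : col k a m = 2 := by
  simp [col, h1, h2]

lemma pred_ne {k : ℕ} (x y : ℕ) (hpar : (x + 1) % 2 ≠ y % 2) :
    (x + 1) % (2 * k) ≠ y := by
  intro h
  have h2 : ((x + 1) % (2 * k)) % 2 = (x + 1) % 2 := Nat.mod_mod_of_dvd _ ⟨k, rfl⟩
  omega

lemma prev_facts {k : ℕ} (hk : 0 < k) (x : ℕ) (hx : x < 2 * k) :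
    ((x + (2 * k - 1)) % (2 * k) + 1) % (2 * k) = x ∧
    x % 2 ≠ (x + (2 * k - 1)) % (2 * k) % 2 := by
  have hN : 0 < 2 * k := by omega
  constructor
  · rw [Nat.mod_add_mod]
    have : x + (2 * k - 1) + 1 = x + 2 * k := by omega
    rw [this, Nat.add_mod_right, Nat.mod_eq_of_lt hx]
  · have h2 : (x + (2 * k - 1)) % (2 * k) % 2 = (x + (2 * k - 1)) % 2 :=
      Nat.mod_mod_of_dvd _ ⟨k, rfl⟩
    omega

lemma succ_facts {k : ℕ} (hk : 0 < k) (x : ℕ) (hx : x < 2 * k) :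
    ((x + 1) % (2 * k) + (2 * k - 1)) % (2 * k) = x ∧
    x % 2 ≠ (x + 1) % (2 * k) % 2 := by
  constructor
  · rw [Nat.mod_add_mod]
    have : x + 1 + (2 * k - 1) = x + 2 * k := by omega
    rw [this, Nat.add_mod_right, Nat.mod_eq_of_lt hx]
  · have h2 : (x + 1) % (2 * k) % 2 = (x + 1) % 2 := Nat.mod_mod_of_dvd _ ⟨k, rfl⟩
    omega

lemma lemA {k k₁ r₁ : ℕ} (hk : 4 ≤ k) (hke : Even k) (hk₁ : k / 2 ≤ k₁)
    (hr₁' : r₁ ≤ 2 * k - 1) (a b : GV k k₁ r₁) (hab : a ≠ b) :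
    ∃ M : Fin k → GV k k₁ r₁, Function.Injective M ∧
      ∀ i, col k a (M i) ≠ col k b (M i) := by
  have hk2 : k % 2 = 0 := Nat.even_iff.mp hke
  have hN : 0 < 2 * k := by omega
  by_cases hg : grp a = grp b
  · -- same group
    rcases a with ⟨i, q⟩ | s <;> rcases b with ⟨i', q'⟩ | t
    · -- both designated
      simp only [grp] at hg
      have hii : i = i' := Fin.ext hg
      subst hii
      have hqq : q ≠ q' := fun h => hab (by rw [h])
      refine ⟨fun idx => Sum.inl (⟨2 * idx.val + i.val % 2,
          by have := idx.isLt; have := i.isLt; omega⟩, q), ?_, ?_⟩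
      · intro x y h
        simp only [Sum.inl.injEq, Prod.mk.injEq, Fin.mk.injEq] at h
        exact Fin.ext (by omega)
      · intro idx
        refine ne_of_eq_of_ne (col_eq_zero _ _ ?_)
          (Ne.symm (ne_of_eq_of_ne (col_eq_two _ _ ?_ ?_) (by decide)))
        · simp only [color1, decide_eq_true_eq]
          exact ⟨trivial, by omega⟩
        · simp only [color1, decide_eq_false_iff_not]
          exact fun hc => hqq hc.1.symm
        · simp only [grp]
          exact pred_ne _ _ (by omega)
    · -- a designated, b extra
      simp only [grp] at hg
      refine ⟨fun idx => Sum.inl (⟨2 * idx.val + i.val % 2,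
          by have := idx.isLt; have := i.isLt; omega⟩, q), ?_, ?_⟩
      · intro x y h
        simp only [Sum.inl.injEq, Prod.mk.injEq, Fin.mk.injEq] at h
        exact Fin.ext (by omega)
      · intro idx
        refine ne_of_eq_of_ne (col_eq_zero _ _ ?_)
          (Ne.symm (ne_of_eq_of_ne (col_eq_two _ _ rfl ?_) (by decide)))
        · simp only [color1, decide_eq_true_eq]
          exact ⟨trivial, by omega⟩
        · simp only [grp]
          exact pred_ne _ _ (by omega)
    · -- a extra, b designated
      simp only [grp] at hg
      refine ⟨fun idx => Sum.inl (⟨2 * idx.val + i'.val % 2,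
          by have := idx.isLt; have := i'.isLt; omega⟩, q'), ?_, ?_⟩
      · intro x y h
        simp only [Sum.inl.injEq, Prod.mk.injEq, Fin.mk.injEq] at h
        exact Fin.ext (by omega)
      · intro idx
        refine Ne.symm (ne_of_eq_of_ne (col_eq_zero _ _ ?_)
          (Ne.symm (ne_of_eq_of_ne (col_eq_two _ _ rfl ?_) (by decide))))
        · simp only [color1, decide_eq_true_eq]
          exact ⟨trivial, by omega⟩
        · simp only [grp]
          exact pred_ne _ _ (by omega)
    · -- both extra
      simp only [grp] at hg
      exact absurd (by rw [Fin.ext hg] : Sum.inr s = (Sum.inr t : GV k k₁ r₁)) hab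
  · -- different groups
    have hga := grp_lt hr₁' a
    have hgb := grp_lt hr₁' b
    obtain ⟨hpa1, hpa2⟩ := prev_facts (by omega) (grp a) hga
    obtain ⟨hpb1, hpb2⟩ := prev_facts (by omega) (grp b) hgb
    have hpab : (grp a + (2 * k - 1)) % (2 * k) ≠ (grp b + (2 * k - 1)) % (2 * k) :=
      fun h => hg (by rw [← hpa1, ← hpb1, h])
    refine ⟨fun idx => if h : idx.val < k / 2
        then Sum.inl (⟨(grp a + (2 * k - 1)) % (2 * k), Nat.mod_lt _ hN⟩, ⟨idx.val, by omega⟩)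
        else Sum.inl (⟨(grp b + (2 * k - 1)) % (2 * k), Nat.mod_lt _ hN⟩,
          ⟨idx.val - k / 2, by have := idx.isLt; omega⟩),
      ?_, ?_⟩
    · intro x y h
      dsimp only at h
      split_ifs at h with h1 h2 h2 <;>
        simp only [Sum.inl.injEq, Prod.mk.injEq, Fin.mk.injEq] at h
      · exact Fin.ext (by omega)
      · exact absurd h.1 hpab
      · exact absurd h.1.symm hpab
      · have := x.isLt; have := y.isLt; exact Fin.ext (by omega)
    · intro idx
      dsimp only
      split_ifs with h1
      · refine ne_of_eq_of_ne (col_eq_one _ _ ?_ ?_) (Ne.symm (col_ne_one _ _ ?_))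
        · exact hpa1
        · exact hpa2
        · exact fun h => hg (hpa1.symm.trans h)
      · refine Ne.symm (ne_of_eq_of_ne (col_eq_one _ _ ?_ ?_) (Ne.symm (col_ne_one _ _ ?_)))
        · exact hpb1
        · exact hpb2
        · exact fun h => hg ((hpb1.symm.trans h).symm)

lemma lemB {k k₁ r₁ : ℕ} (hk : 4 ≤ k) (hke : Even k) (hk₁ : k / 2 ≤ k₁)
    (hr₁' : r₁ ≤ 2 * k - 1) (a b : GV k k₁ r₁) (hab : a ≠ b) :
    ∃ M : Fin k → GV k k₁ r₁, Function.Injective M ∧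
      ∀ i, col k (M i) a ≠ col k (M i) b := by
  have hk2 : k % 2 = 0 := Nat.even_iff.mp hke
  have hN : 0 < 2 * k := by omega
  by_cases hg : grp a = grp b
  · -- same group
    rcases a with ⟨i, q⟩ | s <;> rcases b with ⟨i', q'⟩ | t
    · -- both designated
      simp only [grp] at hg
      have hii : i = i' := Fin.ext hg
      subst hii
      have hqq : q ≠ q' := fun h => hab (by rw [h])
      refine ⟨fun idx => Sum.inl (⟨2 * idx.val + i.val % 2,
          by have := idx.isLt; have := i.isLt; omega⟩, q), ?_, ?_⟩
      · intro x y h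
        simp only [Sum.inl.injEq, Prod.mk.injEq, Fin.mk.injEq] at h
        exact Fin.ext (by omega)
      · intro idx
        refine ne_of_eq_of_ne (col_eq_zero _ _ ?_)
          (Ne.symm (ne_of_eq_of_ne (col_eq_two _ _ ?_ ?_) (by decide)))
        · simp only [color1, decide_eq_true_eq]
          exact ⟨trivial, by omega⟩
        · simp only [color1, decide_eq_false_iff_not]
          exact fun hc => hqq hc.1
        · simp only [grp]
          exact pred_ne _ _ (by omega)
    · -- a designated, b extra
      simp only [grp] at hg
      refine ⟨fun idx => Sum.inl (⟨2 * idx.val + i.val % 2,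
          by have := idx.isLt; have := i.isLt; omega⟩, q), ?_, ?_⟩
      · intro x y h
        simp only [Sum.inl.injEq, Prod.mk.injEq, Fin.mk.injEq] at h
        exact Fin.ext (by omega)
      · intro idx
        refine ne_of_eq_of_ne (col_eq_zero _ _ ?_)
          (Ne.symm (ne_of_eq_of_ne (col_eq_two _ _ rfl ?_) (by decide)))
        · simp only [color1, decide_eq_true_eq]
          exact ⟨trivial, by omega⟩
        · simp only [grp]
          exact pred_ne _ _ (by omega)
    · -- a extra, b designated
      simp only [grp] at hg
      refine ⟨fun idx => Sum.inl (⟨2 * idx.val + i'.val % 2,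
          by have := idx.isLt; have := i'.isLt; omega⟩, q'), ?_, ?_⟩
      · intro x y h
        simp only [Sum.inl.injEq, Prod.mk.injEq, Fin.mk.injEq] at h
        exact Fin.ext (by omega)
      · intro idx
        refine Ne.symm (ne_of_eq_of_ne (col_eq_zero _ _ ?_)
          (Ne.symm (ne_of_eq_of_ne (col_eq_two _ _ rfl ?_) (by decide))))
        · simp only [color1, decide_eq_true_eq]
          exact ⟨trivial, by omega⟩
        · simp only [grp]
          exact pred_ne _ _ (by omega)
    · -- both extra
      simp only [grp] at hg
      exact absurd (by rw [Fin.ext hg] : Sum.inr s = (Sum.inr t : GV k k₁ r₁)) hab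
  · -- different groups
    have hga := grp_lt hr₁' a
    have hgb := grp_lt hr₁' b
    obtain ⟨hsa1, hsa2⟩ := succ_facts (by omega) (grp a) hga
    obtain ⟨hsb1, hsb2⟩ := succ_facts (by omega) (grp b) hgb
    have hsab : (grp a + 1) % (2 * k) ≠ (grp b + 1) % (2 * k) :=
      fun h => hg (by rw [← hsa1, ← hsb1, h])
    refine ⟨fun idx => if h : idx.val < k / 2
        then Sum.inl (⟨(grp a + 1) % (2 * k), Nat.mod_lt _ hN⟩, ⟨idx.val, by omega⟩)
        else Sum.inl (⟨(grp b + 1) % (2 * k), Nat.mod_lt _ hN⟩,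
          ⟨idx.val - k / 2, by have := idx.isLt; omega⟩),
      ?_, ?_⟩
    · intro x y h
      dsimp only at h
      split_ifs at h with h1 h2 h2 <;>
        simp only [Sum.inl.injEq, Prod.mk.injEq, Fin.mk.injEq] at h
      · exact Fin.ext (by omega)
      · exact absurd h.1 hsab
      · exact absurd h.1.symm hsab
      · have := x.isLt; have := y.isLt; exact Fin.ext (by omega)
    · intro idx
      dsimp only
      split_ifs with h1
      · refine ne_of_eq_of_ne (col_eq_one _ _ rfl ?_) (Ne.symm (col_ne_one _ _ ?_))
        · exact fun h => hsa2 h.symm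
        · exact fun h => hg ((hsa1 ▸ hsb1 ▸ congrArg (fun z => (z + (2 * k - 1)) % (2 * k)) h).symm)
      · refine Ne.symm (ne_of_eq_of_ne (col_eq_one _ _ rfl ?_) (Ne.symm (col_ne_one _ _ ?_)))
        · exact fun h => hsb2 h.symm
        · exact fun h => hg (hsa1 ▸ hsb1 ▸ congrArg (fun z => (z + (2 * k - 1)) % (2 * k)) h)

lemma builder {V : Type*} {G : SimpleGraph V} (c : Sym2 V → Fin 3) {u v : V}
    (huv : u ≠ v) {k : ℕ} (M : Fin k → V) (hinj : Function.Injective M)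
    (hadjU : ∀ i, G.Adj u (M i)) (hadjV : ∀ i, G.Adj (M i) v)
    (hcol : ∀ i, c s(u, M i) ≠ c s(M i, v)) :
    ∃ P : Fin k → G.Walk u v,
      Function.Injective P ∧
      (∀ i, RainbowPath c (P i)) ∧
      (∀ i, (P i).length = 2) ∧
      ∀ i i', i ≠ i' → IntDisjoint (P i) (P i') := by
  refine ⟨fun i => Walk.cons (hadjU i) (Walk.cons (hadjV i) Walk.nil), ?_, ?_, ?_, ?_⟩
  · intro i j h
    have hs := congrArg Walk.support h
    simp only [Walk.support_cons, Walk.support_nil, List.cons.injEq] at hs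
    exact hinj hs.2.1
  · intro i
    constructor
    · rw [Walk.isPath_def]
      simp only [Walk.support_cons, Walk.support_nil]
      simp [List.nodup_cons, huv, (hadjU i).ne, (hadjV i).ne]
    · simp only [Walk.edges_cons, Walk.edges_nil, List.map_cons, List.map_nil,
        List.nodup_cons, List.mem_singleton, List.nodup_singleton, and_true,
        List.not_mem_nil, or_false]
      exact ⟨hcol i, by simp⟩
  · intro i; rfl
  · intro i i' hii x hx hx'
    simp only [Walk.support_cons, Walk.support_nil, List.mem_cons,
      List.not_mem_nil, or_false] at hx hx'
    rcases hx with h1 | h1 | h1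
    · exact Or.inl h1
    · rcases hx' with h2 | h2 | h2
      · exact Or.inl h2
      · exact absurd (hinj (h1.symm.trans h2)) hii
      · exact Or.inr h2
    · exact Or.inr h1

theorem stmt7 (k k₁ r₁ : ℕ) (hk : 4 ≤ k) (hke : Even k)
    (hk₁ : k / 2 ≤ k₁) (hr₁ : 1 ≤ r₁) (hr₁' : r₁ ≤ 2 * k - 1)
    (u v : GV k k₁ r₁ ⊕ GV k k₁ r₁) (huv : u ≠ v)
    (hsame : u.isLeft = v.isLeft) :
    ∃ P : Fin k →
        (completeBipartiteGraph (GV k k₁ r₁) (GV k k₁ r₁)).Walk u v,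
      Function.Injective P ∧
      (∀ i, RainbowPath (theColoring k k₁ r₁) (P i)) ∧
      (∀ i, (P i).length = 2) ∧
      ∀ i i', i ≠ i' → IntDisjoint (P i) (P i') := by
  rcases u with a | a <;> rcases v with b | b <;> simp only [Sum.isLeft_inl,
    Sum.isLeft_inr] at hsame
  · have hab : a ≠ b := fun h => huv (by rw [h])
    obtain ⟨M, hMinj, hMcol⟩ := lemA hk hke hk₁ hr₁' a b hab
    exact builder _ huv (fun i => Sum.inr (M i))
      (fun x y h => hMinj (Sum.inr.inj h))
      (fun i => by simp) (fun i => by simp)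
      (fun i => hMcol i)
  · exact absurd hsame (by simp)
  · exact absurd hsame (by simp)
  · have hab : a ≠ b := fun h => huv (by rw [h])
    obtain ⟨M, hMinj, hMcol⟩ := lemB hk hke hk₁ hr₁' a b hab
    exact builder _ huv (fun i => Sum.inl (M i))
      (fun x y h => hMinj (Sum.inl.inj h))
      (fun i => by simp) (fun i => by simp)
      (fun i => hMcol i)
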